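/- Variation of constants formula: let e : ℝ → ℝ^d be twice differentiable with e''(s) = −Ω²·e(s) + G·e(s) for all s, where G is any real d×d matrix and Ω is diagonal. Then for all t, t' ∈ ℝ: e(t) = cos((t − t')Ω)·e(t') + (t − t')·sinc((t − t')Ω)·e'(t') + (t − t')·∫₀¹ (t − t')(1 − ξ)·sinc((t − t')(1 − ξ)Ω)·G·e(t'(1 − ξ) + t·ξ) dξ, and e'(t) = −Ω·sin((t − t')Ω)·e(t') + cos((t − t')Ω)·e'(t') + (t − t')·∫₀¹ cos((t − t')(1 − ξ)Ω)·G·e(t'(1 − ξ) + t·ξ) dξ. -/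

import Mathlib

noncomputable def sinc (z : ℝ) : ℝ := if z = 0 then 1 else Real.sin z / z

noncomputable def mulE {d : ℕ} (A : Matrix (Fin d) (Fin d) ℝ)
    (v : EuclideanSpace ℝ (Fin d)) : EuclideanSpace ℝ (Fin d) :=
  (WithLp.equiv 2 (Fin d → ℝ)).symm (A.mulVec ((WithLp.equiv 2 (Fin d → ℝ)) v))

noncomputable def fDiag {d : ℕ} (f : ℝ → ℝ) (s : ℝ) (ωv : Fin d → ℝ) :
    Matrix (Fin d) (Fin d) ℝ :=
  Matrix.diagonal fun i => f (s * ωv i)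

lemma sinc_mul_self (x ω : ℝ) :
    x * sinc (x * ω) = if ω = 0 then x else Real.sin (x * ω) / ω := by
  by_cases hω : ω = 0
  · simp [sinc, hω]
  · by_cases hx : x = 0
    · simp [sinc, hx]
    · have h : x * ω ≠ 0 := mul_ne_zero hx hω
      simp only [sinc, if_neg h, if_neg hω]
      field_simp

lemma cont_aux (t ω : ℝ) : Continuous (fun s => (t - s) * sinc ((t - s) * ω)) := by
  have h : (fun s => (t - s) * sinc ((t - s) * ω))
      = fun s => if ω = 0 then t - s else Real.sin ((t - s) * ω) / ω := by
    funext s; rw [sinc_mul_self]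
  rw [h]
  by_cases hω : ω = 0
  · simp only [if_pos hω]; fun_prop
  · simp only [if_neg hω]; fun_prop

lemma deriv_aux1 (ω t : ℝ) (u v g : ℝ → ℝ)
    (hu : ∀ s, HasDerivAt u (v s) s)
    (hv : ∀ s, HasDerivAt v (-ω^2 * u s + g s) s) (s : ℝ) :
    HasDerivAt (fun s => Real.cos ((t - s) * ω) * u s + ((t - s) * sinc ((t - s) * ω)) * v s)
      ((t - s) * sinc ((t - s) * ω) * g s) s := by
  have hfun : (fun s => Real.cos ((t - s) * ω) * u s + ((t - s) * sinc ((t - s) * ω)) * v s)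
      = fun s => Real.cos ((t - s) * ω) * u s
        + (if ω = 0 then t - s else Real.sin ((t - s) * ω) / ω) * v s := by
    funext s; rw [sinc_mul_self]
  rw [hfun, show (t - s) * sinc ((t - s) * ω) * g s
      = (if ω = 0 then t - s else Real.sin ((t - s) * ω) / ω) * g s from by rw [sinc_mul_self]]
  have hlin : HasDerivAt (fun s : ℝ => (t - s) * ω) ((0 - 1) * ω) s :=
    (((hasDerivAt_const s t).sub (hasDerivAt_id s))).mul_const ω
  have hcos : HasDerivAt (fun s => Real.cos ((t - s) * ω))
      (-Real.sin ((t - s) * ω) * ((0 - 1) * ω)) s :=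
    (Real.hasDerivAt_cos _).comp s hlin
  have hsin : HasDerivAt (fun s => Real.sin ((t - s) * ω))
      (Real.cos ((t - s) * ω) * ((0 - 1) * ω)) s :=
    (Real.hasDerivAt_sin _).comp s hlin
  by_cases hω : ω = 0
  · simp only [hω, if_pos rfl, mul_zero, Real.cos_zero, one_mul]
    have h1 : HasDerivAt (fun s : ℝ => t - s) (0 - 1) s :=
      (hasDerivAt_const s t).sub (hasDerivAt_id s)
    have := (hu s).add ((h1.mul (hv s)))
    refine this.congr_deriv ?_
    simp [hω]
  · simp only [if_neg hω]
    have := (hcos.mul (hu s)).add (((hsin.div_const ω)).mul (hv s))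
    refine this.congr_deriv ?_
    field_simp
    ring

lemma deriv_aux2 (ω t : ℝ) (u v g : ℝ → ℝ)
    (hu : ∀ s, HasDerivAt u (v s) s)
    (hv : ∀ s, HasDerivAt v (-ω^2 * u s + g s) s) (s : ℝ) :
    HasDerivAt (fun s => -(ω * Real.sin ((t - s) * ω)) * u s + Real.cos ((t - s) * ω) * v s)
      (Real.cos ((t - s) * ω) * g s) s := by
  have hlin : HasDerivAt (fun s : ℝ => (t - s) * ω) ((0 - 1) * ω) s :=
    (((hasDerivAt_const s t).sub (hasDerivAt_id s))).mul_const ω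
  have hcos : HasDerivAt (fun s => Real.cos ((t - s) * ω))
      (-Real.sin ((t - s) * ω) * ((0 - 1) * ω)) s :=
    (Real.hasDerivAt_cos _).comp s hlin
  have hsin : HasDerivAt (fun s => Real.sin ((t - s) * ω))
      (Real.cos ((t - s) * ω) * ((0 - 1) * ω)) s :=
    (Real.hasDerivAt_sin _).comp s hlin
  have := ((((hsin.const_mul ω).neg).mul (hu s))).add ((hcos.mul (hv s)))
  refine this.congr_deriv ?_
  simp only [Pi.neg_apply]
  ring

lemma scalar1 (ω t t' : ℝ) (u v g : ℝ → ℝ)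
    (hu : ∀ s, HasDerivAt u (v s) s)
    (hv : ∀ s, HasDerivAt v (-ω^2 * u s + g s) s) (hg : Continuous g) :
    u t = Real.cos ((t - t') * ω) * u t' + ((t - t') * sinc ((t - t') * ω)) * v t'
      + ∫ s in t'..t, ((t - s) * sinc ((t - s) * ω)) * g s := by
  have hint : IntervalIntegrable (fun s => ((t - s) * sinc ((t - s) * ω)) * g s)
      MeasureTheory.volume t' t := ((cont_aux t ω).mul hg).intervalIntegrable t' t
  have h := intervalIntegral.integral_eq_sub_of_hasDerivAt
    (f := fun s => Real.cos ((t - s) * ω) * u s + ((t - s) * sinc ((t - s) * ω)) * v s)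
    (fun s _ => deriv_aux1 ω t u v g hu hv s) hint
  simp only [sub_self, zero_mul, Real.cos_zero, one_mul, mul_zero] at h
  linarith [h]

lemma scalar2 (ω t t' : ℝ) (u v g : ℝ → ℝ)
    (hu : ∀ s, HasDerivAt u (v s) s)
    (hv : ∀ s, HasDerivAt v (-ω^2 * u s + g s) s) (hg : Continuous g) :
    v t = -(ω * Real.sin ((t - t') * ω)) * u t' + Real.cos ((t - t') * ω) * v t'
      + ∫ s in t'..t, Real.cos ((t - s) * ω) * g s := by
  have hint : IntervalIntegrable (fun s => Real.cos ((t - s) * ω) * g s)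
      MeasureTheory.volume t' t := by
    apply Continuous.intervalIntegrable
    fun_prop
  have h := intervalIntegral.integral_eq_sub_of_hasDerivAt
    (f := fun s => -(ω * Real.sin ((t - s) * ω)) * u s + Real.cos ((t - s) * ω) * v s)
    (fun s _ => deriv_aux2 ω t u v g hu hv s) hint
  simp only [sub_self, zero_mul, Real.sin_zero, Real.cos_zero, one_mul, mul_zero, neg_zero] at h
  linarith [h]

lemma subst_lemma (t t' : ℝ) (f : ℝ → ℝ) :
    (t - t') • ∫ ξ in (0:ℝ)..1, f (t' * (1 - ξ) + t * ξ) = ∫ s in t'..t, f s := by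
  rcases eq_or_ne t t' with h | h
  · subst h; simp
  · have hτ : t - t' ≠ 0 := sub_ne_zero.mpr h
    have key : ∀ ξ : ℝ, t' * (1 - ξ) + t * ξ = (t - t') * ξ + t' := fun ξ => by ring
    simp only [key]
    rw [intervalIntegral.integral_comp_mul_add f hτ t']
    rw [smul_smul, mul_inv_cancel₀ hτ]
    norm_num

/-- Variation of constants formula: for a solution of
`e'' = −Ω²·e + G·e` (with `G` an arbitrary real `d×d` matrix and `Ω` diagonal with
nonnegative entries), for all `t, t'`:
`e(t) = cos((t−t')Ω)·e(t') + (t−t')·sinc((t−t')Ω)·e'(t')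
      + (t−t')·∫₀¹ (t−t')(1−ξ)·sinc((t−t')(1−ξ)Ω)·G·e(t'(1−ξ)+tξ) dξ`
and
`e'(t) = −Ω·sin((t−t')Ω)·e(t') + cos((t−t')Ω)·e'(t')
      + (t−t')·∫₀¹ cos((t−t')(1−ξ)Ω)·G·e(t'(1−ξ)+tξ) dξ`. -/
theorem stmt8
    (d : ℕ) (hd : 1 ≤ d)
    (G : Matrix (Fin d) (Fin d) ℝ)
    (ωv : Fin d → ℝ) (hωv : ∀ i, 0 ≤ ωv i)
    (e ed : ℝ → EuclideanSpace ℝ (Fin d))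
    (he : ∀ s, HasDerivAt e (ed s) s)
    (hed : ∀ s, HasDerivAt ed
      (-mulE ((Matrix.diagonal ωv)^2) (e s) + mulE G (e s)) s) :
    ∀ t t' : ℝ,
      e t = mulE (fDiag Real.cos (t - t') ωv) (e t')
          + (t - t') • mulE (fDiag sinc (t - t') ωv) (ed t')
          + (t - t') • ∫ ξ in (0:ℝ)..1,
              ((t - t') * (1 - ξ)) •
                mulE (fDiag sinc ((t - t') * (1 - ξ)) ωv)
                  (mulE G (e (t' * (1 - ξ) + t * ξ))) ∧
      ed t = -mulE (Matrix.diagonal fun i => ωv i * Real.sin ((t - t') * ωv i)) (e t')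
          + mulE (fDiag Real.cos (t - t') ωv) (ed t')
          + (t - t') • ∫ ξ in (0:ℝ)..1,
              mulE (fDiag Real.cos ((t - t') * (1 - ξ)) ωv)
                (mulE G (e (t' * (1 - ξ) + t * ξ))) := by
  intro t t'
  set g : Fin d → ℝ → ℝ := fun i s => (G.mulVec ((WithLp.equiv 2 (Fin d → ℝ)) (e s))) i with hgdef
  have hu : ∀ i s, HasDerivAt (fun s => e s i) (ed s i) s := fun i s => by
    exact
      (EuclideanSpace.proj (𝕜 := ℝ) i).hasFDerivAt.comp_hasDerivAt s (he s)
  have hcont_e : ∀ i, Continuous fun s => e s i := fun i =>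
    continuous_iff_continuousAt.mpr fun s => (hu i s).continuousAt
  have hg : ∀ i, Continuous (g i) := by
    intro i
    simp only [hgdef, Matrix.mulVec, dotProduct]
    exact continuous_finset_sum _ fun j _ => continuous_const.mul (by
      simpa using hcont_e j)
  have hv : ∀ i s, HasDerivAt (fun s => ed s i) (-(ωv i)^2 * (e s i) + g i s) s := by
    intro i s
    have h := (EuclideanSpace.proj (𝕜 := ℝ) i).hasFDerivAt.comp_hasDerivAt s (hed s)
    have heq : (-mulE ((Matrix.diagonal ωv)^2) (e s) + mulE G (e s)) i
        = -(ωv i)^2 * (e s i) + g i s := by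
      simp [mulE, pow_two, Matrix.diagonal_mul_diagonal, Matrix.mulVec_diagonal,
        PiLp.add_apply, PiLp.neg_apply, hgdef]
    rw [← heq]; exact h
  have E1 : ∀ i, e t i = Real.cos ((t - t') * ωv i) * e t' i
      + ((t - t') * sinc ((t - t') * ωv i)) * ed t' i
      + ∫ s in t'..t, ((t - s) * sinc ((t - s) * ωv i)) * g i s := fun i =>
    scalar1 (ωv i) t t' _ _ _ (hu i) (hv i) (hg i)
  have E2 : ∀ i, ed t i = -(ωv i * Real.sin ((t - t') * ωv i)) * e t' i
      + Real.cos ((t - t') * ωv i) * ed t' i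
      + ∫ s in t'..t, Real.cos ((t - s) * ωv i) * g i s := fun i =>
    scalar2 (ωv i) t t' _ _ _ (hu i) (hv i) (hg i)
  have hσ : Continuous (fun ξ : ℝ => t' * (1 - ξ) + t * ξ) := by fun_prop
  -- the two vector integrands
  set V1 : ℝ → EuclideanSpace ℝ (Fin d) := fun ξ =>
    ((t - t') * (1 - ξ)) • mulE (fDiag sinc ((t - t') * (1 - ξ)) ωv)
      (mulE G (e (t' * (1 - ξ) + t * ξ))) with hV1def
  set V2 : ℝ → EuclideanSpace ℝ (Fin d) := fun ξ =>
    mulE (fDiag Real.cos ((t - t') * (1 - ξ)) ωv)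
      (mulE G (e (t' * (1 - ξ) + t * ξ))) with hV2def
  have hV1c : ∀ (ξ : ℝ) (i : Fin d), V1 ξ i
      = ((t - (t' * (1 - ξ) + t * ξ)) * sinc ((t - (t' * (1 - ξ) + t * ξ)) * ωv i))
          * g i (t' * (1 - ξ) + t * ξ) := by
    intro ξ i
    have harg : t - (t' * (1 - ξ) + t * ξ) = (t - t') * (1 - ξ) := by ring
    simp only [hV1def, hgdef, mulE, fDiag, PiLp.smul_apply, WithLp.equiv_symm_apply, PiLp.toLp_apply,
      WithLp.equiv_apply, WithLp.ofLp_toLp, Matrix.mulVec_diagonal, smul_eq_mul, harg]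
    ring
  have hV2c : ∀ (ξ : ℝ) (i : Fin d), V2 ξ i
      = Real.cos ((t - (t' * (1 - ξ) + t * ξ)) * ωv i) * g i (t' * (1 - ξ) + t * ξ) := by
    intro ξ i
    have harg : t - (t' * (1 - ξ) + t * ξ) = (t - t') * (1 - ξ) := by ring
    simp only [hV2def, hgdef, mulE, fDiag, WithLp.equiv_symm_apply, PiLp.toLp_apply,
      WithLp.equiv_apply, WithLp.ofLp_toLp, Matrix.mulVec_diagonal, harg]
  have hV1cont : Continuous V1 := by
    have h : Continuous (fun ξ => (fun i => V1 ξ i) : ℝ → (Fin d → ℝ)) :=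
      continuous_pi fun i => by
        simp only [hV1c]
        exact ((cont_aux t (ωv i)).comp hσ).mul ((hg i).comp hσ)
    exact (PiLp.continuous_toLp 2 fun _ : Fin d => ℝ).comp h
  have hV2cont : Continuous V2 := by
    have h : Continuous (fun ξ => (fun i => V2 ξ i) : ℝ → (Fin d → ℝ)) :=
      continuous_pi fun i => by
        simp only [hV2c]
        exact ((Real.continuous_cos.comp (by fun_prop))).mul ((hg i).comp hσ)
    exact (PiLp.continuous_toLp 2 fun _ : Fin d => ℝ).comp h
  have hproj1 : ∀ i, (∫ ξ in (0:ℝ)..1, V1 ξ) i = ∫ ξ in (0:ℝ)..1, V1 ξ i := fun i => by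
    have := (EuclideanSpace.proj (𝕜 := ℝ) i).intervalIntegral_comp_comm
      (hV1cont.intervalIntegrable (μ := MeasureTheory.volume) 0 1)
    exact this.symm
  have hproj2 : ∀ i, (∫ ξ in (0:ℝ)..1, V2 ξ) i = ∫ ξ in (0:ℝ)..1, V2 ξ i := fun i => by
    have := (EuclideanSpace.proj (𝕜 := ℝ) i).intervalIntegral_comp_comm
      (hV2cont.intervalIntegrable (μ := MeasureTheory.volume) 0 1)
    exact this.symm
  constructor
  · ext i
    simp only [PiLp.add_apply, PiLp.smul_apply, smul_eq_mul, mulE, fDiag,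
      WithLp.equiv_symm_apply, PiLp.toLp_apply, WithLp.equiv_apply, WithLp.ofLp_toLp, Matrix.mulVec_diagonal]
    rw [hproj1 i]
    rw [intervalIntegral.integral_congr (g := fun ξ =>
      (fun s => ((t - s) * sinc ((t - s) * ωv i)) * g i s) (t' * (1 - ξ) + t * ξ))
      (fun ξ _ => hV1c ξ i)]
    have S := subst_lemma t t' (fun s => ((t - s) * sinc ((t - s) * ωv i)) * g i s)
    rw [smul_eq_mul] at S
    linear_combination E1 i - S
  · ext i
    simp only [PiLp.add_apply, PiLp.smul_apply, PiLp.neg_apply, smul_eq_mul, mulE, fDiag,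
      WithLp.equiv_symm_apply, PiLp.toLp_apply, WithLp.equiv_apply, WithLp.ofLp_toLp, Matrix.mulVec_diagonal]
    rw [hproj2 i]
    rw [intervalIntegral.integral_congr (g := fun ξ =>
      (fun s => Real.cos ((t - s) * ωv i) * g i s) (t' * (1 - ξ) + t * ξ))
      (fun ξ _ => hV2c ξ i)]
    have S := subst_lemma t t' (fun s => Real.cos ((t - s) * ωv i) * g i s)
    rw [smul_eq_mul] at S
    linear_combination E2 i - S
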